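/- lim_{k→∞} k·η_k² = 1/8. -/

import Mathlib

open Filter Set
open Topology

/-- `C_k = (2k-2)!/(k-1)!` as a real number. -/
noncomputable def Cc (k : ℕ) : ℝ :=
  ((2 * k - 2).factorial : ℝ) / ((k - 1).factorial : ℝ)

/-- `p_k(z) = 1 − 2z − (7+8k)z²`. -/
noncomputable def Pp (k : ℕ) (z : ℝ) : ℝ := 1 - 2 * z - (7 + 8 * k) * z ^ 2

/-- `h_k(z) = 1 − z − C_k·z^{2k+1}`. -/
noncomputable def Hh (k : ℕ) (z : ℝ) : ℝ := 1 - z - Cc k * z ^ (2 * k + 1)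

/-- `Δ_k(z) = p_k(z) + 4·C_k·z^{2k+1}·h_k(z)`. -/
noncomputable def Dd (k : ℕ) (z : ℝ) : ℝ :=
  Pp k z + 4 * Cc k * z ^ (2 * k + 1) * Hh k z

/-- `g_k(z) = 2 − C_k·z^{2k−1}·(h_k(z) − C_k·z^{2k−1})`. -/
noncomputable def Gg (k : ℕ) (z : ℝ) : ℝ :=
  2 - Cc k * z ^ (2 * k - 1) * (Hh k z - Cc k * z ^ (2 * k - 1))

/-- `ρ_k = 1/(1+√(8+8k))`, the positive root of `p_k`. -/
noncomputable def rho (k : ℕ) : ℝ := 1 / (1 + Real.sqrt (8 + 8 * k))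

/-- `ψ_k(x) = −x·Δ_k′(x)`. -/
noncomputable def psi (k : ℕ) (x : ℝ) : ℝ := -x * deriv (Dd k) x

/-- `η` is a root of `Δ_k` in the interval `(0, 1/√(8+8k))`, and is the unique such root. -/
def IsEta (k : ℕ) (η : ℝ) : Prop :=
  η ∈ Set.Ioo (0 : ℝ) (1 / Real.sqrt (8 + 8 * k)) ∧ Dd k η = 0 ∧
    ∀ x ∈ Set.Ioo (0 : ℝ) (1 / Real.sqrt (8 + 8 * k)), Dd k x = 0 → x = η

lemma Cc_eq (k : ℕ) (hk : 2 ≤ k) : Cc k = ((2*k-2).descFactorial (k-1) : ℝ) := by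
  have h : (k-1).factorial * (2*k-2).descFactorial (k-1) = (2*k-2).factorial := by
    have := Nat.factorial_mul_descFactorial (n := 2*k-2) (k := k-1) (by omega)
    rwa [show 2*k-2-(k-1) = k-1 by omega] at this
  rw [Cc, div_eq_iff (by positivity), ← h]
  push_cast
  ring

lemma Cc_nonneg (k : ℕ) : 0 ≤ Cc k := by unfold Cc; positivity

lemma sqrt_facts (k : ℕ) (hk : 2 ≤ k) :
    (Real.sqrt (8 + 8 * k)) ^ 2 = 8 + 8 * (k : ℝ) ∧ 4 ≤ Real.sqrt (8 + 8 * k) := by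
  have h0 : (0:ℝ) ≤ 8 + 8 * k := by positivity
  constructor
  · exact Real.sq_sqrt h0
  · rw [show (4:ℝ) = Real.sqrt 16 by rw [show (16:ℝ) = 4^2 by norm_num, Real.sqrt_sq]; norm_num]
    apply Real.sqrt_le_sqrt
    have : (2:ℝ) ≤ (k:ℝ) := by exact_mod_cast hk
    linarith

/-- key bound: the correction term is tiny. -/
lemma C_small (k : ℕ) (hk : 2 ≤ k) {z : ℝ} (hz : 0 < z)
    (hzs : z ≤ 1 / Real.sqrt (8 + 8 * k)) : Cc k * z ^ (2 * k + 1) ≤ 1 / 16 := by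
  obtain ⟨hs2, hs4⟩ := sqrt_facts k hk
  set s := Real.sqrt (8 + 8 * k) with hs
  have hspos : 0 < s := by linarith
  have hK2 : (2:ℝ) ≤ (k:ℝ) := by exact_mod_cast hk
  have hz4 : z ≤ 1/4 := le_trans hzs (by rw [div_le_div_iff₀ hspos (by norm_num)]; linarith)
  have hz2 : z ^ 2 ≤ 1 / (8 * k) := by
    have h1 : z ^ 2 ≤ (1/s) ^ 2 := by
      apply pow_le_pow_left₀ hz.le hzs
    have h2 : (1/s)^2 = 1/(8 + 8*(k:ℝ)) := by
      rw [div_pow, hs2]; norm_num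
    rw [h2] at h1
    refine h1.trans ?_
    apply one_div_le_one_div_of_le (by linarith)
    linarith
  -- Cc k ≤ (8k)^(k-1)
  have hC : Cc k ≤ (8 * (k:ℝ)) ^ (k - 1) := by
    rw [Cc_eq k hk]
    calc ((2*k-2).descFactorial (k-1) : ℝ) ≤ ((2*k-2)^(k-1) : ℕ) := by
          exact_mod_cast Nat.descFactorial_le_pow _ _
      _ ≤ (8 * (k:ℝ)) ^ (k-1) := by
          push_cast
          apply pow_le_pow_left₀ (by positivity)
          have h2k : ((2*k-2:ℕ):ℝ) ≤ ((2*k:ℕ):ℝ) := by exact_mod_cast Nat.sub_le _ _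
          push_cast at h2k ⊢
          linarith
  have hzp : z ^ (2*k+1) ≤ (1/(8*(k:ℝ)))^k := by
    calc z ^ (2*k+1) = (z^2)^k * z := by ring
      _ ≤ (1/(8*(k:ℝ)))^k * 1 := by
          apply mul_le_mul _ (by linarith) hz.le (by positivity)
          exact pow_le_pow_left₀ (by positivity) hz2 k
      _ = (1/(8*(k:ℝ)))^k := by ring
  have hkpos : (0:ℝ) < 8 * k := by linarith
  calc Cc k * z ^ (2*k+1) ≤ (8*(k:ℝ))^(k-1) * (1/(8*(k:ℝ)))^k := by
        apply mul_le_mul hC hzp (by positivity) (by positivity)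
    _ = 1 / (8*(k:ℝ)) := by
        set K := 8*(k:ℝ) with hKdef
        have hKne : K ≠ 0 := hkpos.ne'
        have hkn : k = (k-1) + 1 := by omega
        rw [hkn, Nat.add_sub_cancel, one_div, inv_pow, pow_succ, mul_inv, ← mul_assoc,
          mul_inv_cancel₀ (pow_ne_zero _ hKne), one_mul]
    _ ≤ 1 / 16 := by
        apply one_div_le_one_div_of_le (by norm_num)
        linarith

/-- positivity of Dd below (1-1/k)·ρ -/
lemma Dd_pos (k : ℕ) (hk : 2 ≤ k) {z : ℝ} (hz : 0 < z)
    (hzk : z ≤ (1 - 1/(k:ℝ)) / (1 + Real.sqrt (8 + 8 * k))) : 0 < Dd k z := by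
  obtain ⟨hs2, hs4⟩ := sqrt_facts k hk
  set s := Real.sqrt (8 + 8 * k) with hs
  have hK2 : (2:ℝ) ≤ (k:ℝ) := by exact_mod_cast hk
  have hspos : (0:ℝ) < 1 + s := by linarith
  have hzs : z ≤ 1 / s := by
    refine hzk.trans ?_
    rw [div_le_div_iff₀ hspos (by linarith)]
    nlinarith [one_div_pos.mpr (lt_of_lt_of_le two_pos hK2 : (0:ℝ) < (k:ℝ))]
  have hC := C_small k hk hz hzs
  have hz4 : z ≤ 1/4 := le_trans hzs (by rw [div_le_div_iff₀ (by linarith) (by norm_num)]; linarith)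
  have hH : 0 ≤ Hh k z := by
    unfold Hh; linarith
  have hPp : 0 < Pp k z := by
    have hu : z * (1 + s) ≤ 1 - 1/(k:ℝ) := by
      rw [← le_div_iff₀ hspos]; exact hzk
    have hu1 : z * (1 + s) < 1 := by
      have : 0 < 1/(k:ℝ) := by positivity
      linarith
    have hP : 0 < (1 - z*(1+s)) * (1 + z*(s-1)) := by
      apply mul_pos (by linarith)
      nlinarith
    have hs2' : z^2 * s^2 = z^2 * (8 + 8*(k:ℝ)) := by rw [hs2]
    unfold Pp
    nlinarith [hP, hs2']
  have hcorr : 0 ≤ 4 * Cc k * z ^ (2*k+1) * Hh k z := by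
    apply mul_nonneg _ hH
    have := Cc_nonneg k
    positivity
  unfold Dd
  linarith

lemma tendsto_s_div (f : ℕ → ℝ) (hf : f = fun k : ℕ => Real.sqrt (8 + 8 * k) / (k : ℝ)) :
    Tendsto f atTop (𝓝 0) := by
  have h1 : Tendsto (fun k : ℕ => (8 + 8 * (k:ℝ)) / (k:ℝ) ^ 2) atTop (𝓝 0) := by
    apply tendsto_of_tendsto_of_tendsto_of_le_of_le' tendsto_const_nhds
      (tendsto_const_div_atTop_nhds_zero_nat 16)
    · filter_upwards [eventually_ge_atTop 1] with k hk
      have : (1:ℝ) ≤ (k:ℝ) := by exact_mod_cast hk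
      positivity
    · filter_upwards [eventually_ge_atTop 1] with k hk
      have hk1 : (1:ℝ) ≤ (k:ℝ) := by exact_mod_cast hk
      rw [div_le_div_iff₀ (by positivity) (by positivity)]
      nlinarith
  have h2 := h1.sqrt
  rw [Real.sqrt_zero] at h2
  apply h2.congr'
  filter_upwards [eventually_ge_atTop 1] with k hk
  have hk1 : (1:ℝ) ≤ (k:ℝ) := by exact_mod_cast hk
  rw [Real.sqrt_div (by positivity), Real.sqrt_sq (by linarith), hf]

lemma tendsto_main : Tendsto (fun k : ℕ =>
    (1 + Real.sqrt (8 + 8 * k)) ^ 2 / (k : ℝ)) atTop (𝓝 8) := by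
  have h1 : Tendsto (fun k : ℕ => 9 / (k:ℝ) + 2 * (Real.sqrt (8 + 8 * k) / (k:ℝ)) + 8)
      atTop (𝓝 (0 + 2 * 0 + 8)) := by
    exact ((tendsto_const_div_atTop_nhds_zero_nat 9).add
      ((tendsto_s_div _ rfl).const_mul 2)).add tendsto_const_nhds
  norm_num at h1
  apply h1.congr'
  filter_upwards [eventually_ge_atTop 1] with k hk
  have hk1 : (1:ℝ) ≤ (k:ℝ) := by exact_mod_cast hk
  have hs2 : (Real.sqrt (8 + 8 * k)) ^ 2 = 8 + 8 * (k:ℝ) := Real.sq_sqrt (by positivity)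
  field_simp
  nlinarith [hs2, Real.sq_sqrt (show (0:ℝ) ≤ 8 * (1 + (k:ℝ)) by positivity)]

/-- `lim_{k→∞} k·η_k² = 1/8`, where `η_k` is the unique root of `Δ_k` in
the real interval `(0, 1/√(8+8k))`. -/
theorem statement8 (η : ℕ → ℝ) (hη : ∀ k, 2 ≤ k → IsEta k (η k)) :
    Tendsto (fun k : ℕ => (k : ℝ) * η k ^ 2) atTop (nhds (1 / 8)) := by
  have hlow : Tendsto (fun k : ℕ =>
      (k:ℝ) * ((1 - 1/(k:ℝ)) / (1 + Real.sqrt (8 + 8 * k))) ^ 2) atTop (𝓝 (1/8)) := by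
    have hw : Tendsto (fun k : ℕ => (1 - 1/(k:ℝ)) ^ 2) atTop (𝓝 ((1 - 0) ^ 2)) :=
      (tendsto_const_nhds.sub tendsto_one_div_atTop_nhds_zero_nat).pow 2
    have hq := tendsto_main.inv₀ (by norm_num : (8:ℝ) ≠ 0)
    have hm := hw.mul hq
    have heq : ((1:ℝ) - 0) ^ 2 * 8⁻¹ = 1/8 := by norm_num
    rw [heq] at hm
    apply hm.congr'
    filter_upwards [eventually_ge_atTop 1] with k hk
    have hk1 : (1:ℝ) ≤ (k:ℝ) := by exact_mod_cast hk
    have hs0 : (0:ℝ) ≤ Real.sqrt (8 + 8 * k) := Real.sqrt_nonneg _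
    have h1s : (1 + Real.sqrt (8 + 8 * k)) ≠ 0 := by positivity
    have hkne : (k:ℝ) ≠ 0 := by positivity
    field_simp
  have hup : Tendsto (fun k : ℕ => (k:ℝ) / (8 + 8 * (k:ℝ))) atTop (𝓝 (1/8)) := by
    have h8 : Tendsto (fun k : ℕ => 8 / (k:ℝ) + 8) atTop (𝓝 (0 + 8)) :=
      (tendsto_const_div_atTop_nhds_zero_nat 8).add tendsto_const_nhds
    have hq := h8.inv₀ (by norm_num : (0:ℝ) + 8 ≠ 0)
    have heq : ((0:ℝ) + 8)⁻¹ = 1/8 := by norm_num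
    rw [heq] at hq
    apply hq.congr'
    filter_upwards [eventually_ge_atTop 1] with k hk
    have hk1 : (1:ℝ) ≤ (k:ℝ) := by exact_mod_cast hk
    have hkne : (k:ℝ) ≠ 0 := by positivity
    field_simp
  apply tendsto_of_tendsto_of_tendsto_of_le_of_le' hlow hup
  · filter_upwards [eventually_ge_atTop 2] with k hk
    obtain ⟨⟨hη0, hηlt⟩, hroot, -⟩ := hη k hk
    have hK2 : (2:ℝ) ≤ (k:ℝ) := by exact_mod_cast hk
    set z := (1 - 1/(k:ℝ)) / (1 + Real.sqrt (8 + 8 * k)) with hzdef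
    have hzη : z < η k := by
      by_contra h
      push_neg at h
      have hpos := Dd_pos k hk hη0 h
      rw [hroot] at hpos
      exact lt_irrefl 0 hpos
    have hz0 : 0 ≤ z := by
      apply div_nonneg _ (by positivity)
      have : 1/(k:ℝ) ≤ 1/2 := by
        apply one_div_le_one_div_of_le <;> linarith
      linarith
    exact mul_le_mul_of_nonneg_left (pow_le_pow_left₀ hz0 hzη.le 2) (by positivity)
  · filter_upwards [eventually_ge_atTop 2] with k hk
    obtain ⟨⟨hη0, hηlt⟩, -, -⟩ := hη k hk
    have hK2 : (2:ℝ) ≤ (k:ℝ) := by exact_mod_cast hk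
    have hs2 : (Real.sqrt (8 + 8 * k)) ^ 2 = 8 + 8 * (k:ℝ) := Real.sq_sqrt (by positivity)
    have hη2 : η k ^ 2 ≤ 1 / (8 + 8 * (k:ℝ)) := by
      have h := pow_le_pow_left₀ hη0.le hηlt.le 2
      rwa [div_pow, one_pow, hs2] at h
    calc (k:ℝ) * η k ^ 2 ≤ (k:ℝ) * (1 / (8 + 8 * (k:ℝ))) :=
          mul_le_mul_of_nonneg_left hη2 (by positivity)
      _ = (k:ℝ) / (8 + 8 * (k:ℝ)) := by rw [mul_one_div]
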